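/- Let 1 ≤ p < ∞ and w ∈ 𝒲. Every normalized block basic sequence of the canonical basis (g_n)_{n≥1} of g(w,p) admits a subsequence that dominates (g_n)_{n≥1}. -/

import Mathlib

open Filter Function Set
open scoped ENNReal NNReal Topology

noncomputable section

/-- The Garling norm of a real sequence, with values in `ℝ≥0∞`:
`‖f‖_{g(w,p)} = sup_φ (∑ n, |f (φ n)|^p · w n)^{1/p}`, the supremum being taken over all
strictly increasing maps `φ : ℕ → ℕ`. -/
def garNorm (w : ℕ → ℝ) (p : ℝ) (f : ℕ → ℝ) : ℝ≥0∞ :=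
  ⨆ φ : {φ : ℕ → ℕ // StrictMono φ},
    (∑' n, ENNReal.ofReal (|f (φ.1 n)| ^ p * w n)) ^ (1 / p)

/-- `w ∈ 𝒲`: a normalized, nonincreasing, positive weight tending to zero and non-summable.
(Sequences are indexed from `0`, so `w 0` is the paper's `w₁`.) -/
structure IsGarlingWeight (w : ℕ → ℝ) : Prop where
  pos : ∀ n, 0 < w n
  first : w 0 = 1
  antitone : ∀ n, w (n + 1) ≤ w n
  tendsto_zero : Tendsto w atTop (𝓝 0)
  not_summable : ¬ Summable w

lemma IsGarlingWeight.anti {w : ℕ → ℝ} (hw : IsGarlingWeight w) : Antitone w :=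
  antitone_nat_of_succ_le hw.antitone

lemma IsGarlingWeight.le_one {w : ℕ → ℝ} (hw : IsGarlingWeight w) (n : ℕ) : w n ≤ 1 := by
  have := hw.anti (Nat.zero_le n); rwa [hw.first] at this

/-- Evaluation of a finite linear combination of disjoint blocks at a point of one block. -/
lemma blocks_eval {P : ℕ → ℕ} (hP : StrictMono P) {a : ℕ → ℝ} {y : ℕ → ℕ → ℝ}
    (hy : ∀ n i, y n i = if P n ≤ i ∧ i < P (n + 1) then a i else 0)
    {k : ℕ → ℕ} (hk : StrictMono k) (b : ℕ → ℝ) (F : Finset ℕ)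
    (hF : ∀ j, j ∉ F → b j = 0) (j : ℕ) (i : ℕ) (h1 : P (k j) ≤ i) (h2 : i < P (k j + 1)) :
    ∑ j' ∈ F, b j' * y (k j') i = b j * a i := by
  have hzero : ∀ j', j' ≠ j → y (k j') i = 0 := by
    intro j' hne
    rw [hy, if_neg]
    rcases lt_or_gt_of_ne hne with h | h
    · rintro ⟨_, hlt⟩
      have : P (k j' + 1) ≤ P (k j) := hP.monotone (Nat.succ_le_of_lt (hk h))
      omega
    · rintro ⟨hge, _⟩
      have : P (k j + 1) ≤ P (k j') := hP.monotone (Nat.succ_le_of_lt (hk h))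
      omega
  by_cases hj : j ∈ F
  · rw [Finset.sum_eq_single_of_mem j hj]
    · rw [hy, if_pos ⟨h1, h2⟩]
    · intro j' _ hne
      rw [hzero j' hne, mul_zero]
  · rw [hF j hj, zero_mul]
    apply Finset.sum_eq_zero
    intro j' hj'
    have hne : j' ≠ j := fun h => hj (h ▸ hj')
    rw [hzero j' hne, mul_zero]

/-- From a norm-one block whose coordinates are all small (relative to a shift `M`), extract a
finite increasing selection inside the block whose sum against the shifted weights is at
least `1/2`. -/
lemma good_sel {p : ℝ} (hp : 1 ≤ p) {w : ℕ → ℝ} (hw : IsGarlingWeight w)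
    {P : ℕ → ℕ} {a : ℕ → ℝ} {y : ℕ → ℕ → ℝ}
    (hy : ∀ n i, y n i = if P n ≤ i ∧ i < P (n + 1) then a i else 0)
    (n : ℕ) (hn : garNorm w p (y n) = 1) (M : ℕ)
    (hsmall : ∀ i, P n ≤ i → i < P (n + 1) → |a i| ^ p ≤ 1 / (4 * ((M : ℝ) + 1))) :
    ∃ σ : ℕ → ℕ, StrictMono σ ∧ ∃ L : ℕ,
      (∀ s, s < L → P n ≤ σ s ∧ σ s < P (n + 1)) ∧
      (1 / 2 : ℝ) ≤ ∑ s ∈ Finset.range L, |a (σ s)| ^ p * w (M + s) := by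
  classical
  have hp0 : 0 < p := lt_of_lt_of_le one_pos hp
  have hpne : p ≠ 0 := ne_of_gt hp0
  have hip0 : (0:ℝ) < 1/p := by positivity
  have habs : ∀ x : ℝ, 0 ≤ |x| ^ p := fun x => Real.rpow_nonneg (abs_nonneg x) p
  have hwpos := hw.pos
  -- Step 1: a selection with unshifted sum > 3/4.
  have h34 : ∃ φ : {φ : ℕ → ℕ // StrictMono φ},
      ENNReal.ofReal (3/4) < ∑' s, ENNReal.ofReal (|y n (φ.1 s)| ^ p * w s) := by
    by_contra hno
    push_neg at hno
    have hle : garNorm w p (y n) ≤ ENNReal.ofReal (3/4) ^ (1/p) := by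
      rw [garNorm]
      exact iSup_le fun φ => ENNReal.rpow_le_rpow (hno φ) hip0.le
    rw [hn] at hle
    have hlt : (ENNReal.ofReal (3/4)) ^ (1/p) < 1 := by
      apply ENNReal.rpow_lt_one _ hip0
      rw [ENNReal.ofReal_lt_one]; norm_num
    exact absurd (lt_of_le_of_lt hle hlt) (lt_irrefl _)
  obtain ⟨φ, hφ34⟩ := h34
  rw [ENNReal.tsum_eq_iSup_sum] at hφ34
  obtain ⟨T, hT⟩ := lt_iSup_iff.mp hφ34
  obtain ⟨N, hTN⟩ := T.exists_nat_subset_range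
  have hN : ENNReal.ofReal (3/4) < ∑ s ∈ Finset.range N, ENNReal.ofReal (|y n (φ.1 s)| ^ p * w s) :=
    lt_of_lt_of_le hT (Finset.sum_le_sum_of_subset hTN)
  rw [← ENNReal.ofReal_sum_of_nonneg (fun s _ => mul_nonneg (habs _) (hwpos s).le)] at hN
  have hreal : (3/4 : ℝ) < ∑ s ∈ Finset.range N, |y n (φ.1 s)| ^ p * w s := by
    by_contra hcon
    push_neg at hcon
    exact absurd (lt_of_lt_of_le hN (ENNReal.ofReal_le_ofReal hcon)) (lt_irrefl _)
  -- coordinates are small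
  have hcsmall : ∀ s : ℕ, |y n (φ.1 s)| ^ p ≤ 1 / (4 * ((M:ℝ) + 1)) := by
    intro s
    rw [hy]
    split_ifs with h
    · exact hsmall _ h.1 h.2
    · rw [abs_zero, Real.zero_rpow hpne]; positivity
  -- shifting the weights loses at most 1/4
  have hWM : ∑ s ∈ Finset.range M, w s ≤ (M : ℝ) := by
    calc ∑ s ∈ Finset.range M, w s ≤ ∑ s ∈ Finset.range M, 1 :=
          Finset.sum_le_sum fun s _ => hw.le_one s
      _ = M := by simp
  have hwsplit : ∑ s ∈ Finset.range (M + N), w s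
      = ∑ s ∈ Finset.range M, w s + ∑ s ∈ Finset.range N, w (M + s) :=
    Finset.sum_range_add w M N
  have hwle : ∑ s ∈ Finset.range N, w s - ∑ s ∈ Finset.range N, w (M + s) ≤ (M:ℝ) := by
    have h1 : ∑ s ∈ Finset.range N, w s ≤ ∑ s ∈ Finset.range (M + N), w s :=
      Finset.sum_le_sum_of_subset_of_nonneg (Finset.range_subset_range.2 (by omega))
        (fun i _ _ => (hwpos i).le)
    linarith
  have hshift : (1/2 : ℝ) ≤ ∑ s ∈ Finset.range N, |y n (φ.1 s)| ^ p * w (M + s) := by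
    have hterm : ∀ s ∈ Finset.range N,
        |y n (φ.1 s)| ^ p * w s - |y n (φ.1 s)| ^ p * w (M + s)
          ≤ (1 / (4 * ((M:ℝ)+1))) * (w s - w (M + s)) := by
      intro s _
      rw [← mul_sub]
      apply mul_le_mul_of_nonneg_right (hcsmall s)
      have : w (M + s) ≤ w s := hw.anti (by omega)
      linarith
    have hd : ∑ s ∈ Finset.range N, (|y n (φ.1 s)| ^ p * w s - |y n (φ.1 s)| ^ p * w (M + s))
        ≤ (1 / (4 * ((M:ℝ)+1))) * (M:ℝ) := by
      calc ∑ s ∈ Finset.range N, (|y n (φ.1 s)| ^ p * w s - |y n (φ.1 s)| ^ p * w (M + s))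
          ≤ ∑ s ∈ Finset.range N, (1/(4*((M:ℝ)+1))) * (w s - w (M+s)) := Finset.sum_le_sum hterm
        _ = (1/(4*((M:ℝ)+1))) * (∑ s ∈ Finset.range N, w s - ∑ s ∈ Finset.range N, w (M+s)) := by
            rw [← Finset.sum_sub_distrib, Finset.mul_sum]
        _ ≤ (1 / (4 * ((M:ℝ)+1))) * (M:ℝ) := by
            apply mul_le_mul_of_nonneg_left hwle (by positivity)
    rw [Finset.sum_sub_distrib] at hd
    have hMq : (1 / (4 * ((M:ℝ)+1))) * (M:ℝ) ≤ 1/4 := by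
      rw [div_mul_eq_mul_div, one_mul, div_le_div_iff₀ (by positivity) (by norm_num)]
      have : (0:ℝ) ≤ (M:ℝ) := Nat.cast_nonneg M
      nlinarith
    linarith
  -- filter the selection into the block
  set J : Finset ℕ := (Finset.range N).filter (fun s => y n (φ.1 s) ≠ 0) with hJdef
  set L := J.card with hLdef
  have hcard : J.card = L := rfl
  have hJN : ∀ s ∈ J, s < N := fun s hs => Finset.mem_range.1 (Finset.mem_filter.1 hs).1
  set jf : ℕ → ℕ := fun t => if h : t < L then (J.orderEmbOfFin hcard ⟨t, h⟩ : ℕ) else N + t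
    with hjfdef
  have hjfmem : ∀ t, t < L → jf t ∈ J := by
    intro t h
    rw [hjfdef]
    simp only [dif_pos h]
    exact Finset.orderEmbOfFin_mem J hcard ⟨t, h⟩
  have hjfmono : StrictMono jf := by
    intro t t' htt
    rcases lt_or_ge t' L with h' | h'
    · have h : t < L := lt_trans htt h'
      rw [hjfdef]
      simp only [dif_pos h, dif_pos h']
      exact (J.orderEmbOfFin hcard).strictMono (Fin.mk_lt_mk.2 htt)
    · rcases lt_or_ge t L with h | h
      · rw [hjfdef]
        simp only [dif_pos h, dif_neg (not_lt.2 h')]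
        have := hJN _ (Finset.orderEmbOfFin_mem J hcard ⟨t, h⟩); omega
      · rw [hjfdef]
        simp only [dif_neg (not_lt.2 h), dif_neg (not_lt.2 h')]
        omega
  have hjfle : ∀ t, t ≤ jf t := fun t => hjfmono.le_apply
  have himg : J = (Finset.range L).image jf := by
    apply (Finset.eq_of_subset_of_card_le ?_ ?_).symm
    · intro x hx
      obtain ⟨t, ht, rfl⟩ := Finset.mem_image.1 hx
      exact hjfmem t (Finset.mem_range.1 ht)
    · rw [Finset.card_image_of_injOn (fun x _ z _ h => hjfmono.injective h)]
      simp
      exact hcard.le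
  have hblockσ : ∀ t, t < L → P n ≤ φ.1 (jf t) ∧ φ.1 (jf t) < P (n + 1) := by
    intro t ht
    have hne : y n (φ.1 (jf t)) ≠ 0 := (Finset.mem_filter.1 (hjfmem t ht)).2
    rw [hy] at hne
    by_contra hc
    rw [if_neg hc] at hne
    exact hne rfl
  refine ⟨fun s => φ.1 (jf s), φ.2.comp hjfmono, L, hblockσ, ?_⟩
  have h0 : ∑ s ∈ Finset.range N, |y n (φ.1 s)| ^ p * w (M + s)
      = ∑ s ∈ J, |y n (φ.1 s)| ^ p * w (M + s) := by
    rw [hJdef]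
    exact (Finset.sum_filter_of_ne (fun x _ hfx => by
      intro hyx
      apply hfx
      rw [hyx, abs_zero, Real.zero_rpow hpne, zero_mul])).symm
  have h1 : ∑ s ∈ J, |y n (φ.1 s)| ^ p * w (M + s)
      = ∑ t ∈ Finset.range L, |y n (φ.1 (jf t))| ^ p * w (M + jf t) := by
    rw [himg, Finset.sum_image (fun x _ z _ h => hjfmono.injective h)]
  have h2 : ∑ t ∈ Finset.range L, |y n (φ.1 (jf t))| ^ p * w (M + jf t)
      ≤ ∑ t ∈ Finset.range L, |y n (φ.1 (jf t))| ^ p * w (M + t) := by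
    apply Finset.sum_le_sum
    intro t _
    exact mul_le_mul_of_nonneg_left (hw.anti (by have := hjfle t; omega)) (habs _)
  have h3 : ∑ t ∈ Finset.range L, |y n (φ.1 (jf t))| ^ p * w (M + t)
      = ∑ t ∈ Finset.range L, |a (φ.1 (jf t))| ^ p * w (M + t) := by
    apply Finset.sum_congr rfl
    intro t ht
    have hbt := hblockσ t (Finset.mem_range.1 ht)
    rw [hy, if_pos ⟨hbt.1, hbt.2⟩]
  have := hshift
  rw [h0, h1] at this
  linarith
/-- **Statement 7.** Every normalized block basic sequence of the canonical basis `(g_n)` of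
`g(w,p)` admits a subsequence that dominates `(g_n)`. -/
theorem garling_block_subsequence_dominates (p : ℝ) (hp : 1 ≤ p)
    (w : ℕ → ℝ) (hw : IsGarlingWeight w)
    (P : ℕ → ℕ) (hP0 : P 0 = 0) (hP : StrictMono P)
    (a : ℕ → ℝ) (y : ℕ → ℕ → ℝ)
    (hy : ∀ n i, y n i = if P n ≤ i ∧ i < P (n + 1) then a i else 0)
    (hynz : ∀ n, y n ≠ 0)
    (hnorm : ∀ n, garNorm w p (y n) = 1) :
    ∃ k : ℕ → ℕ, StrictMono k ∧ ∃ C : ℝ, 0 < C ∧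
      ∀ (b : ℕ → ℝ) (hb : (Function.support b).Finite),
        garNorm w p b
          ≤ ENNReal.ofReal C * garNorm w p (fun i => ∑ j ∈ hb.toFinset, b j * y (k j) i) := by
  classical
  have hp0 : 0 < p := lt_of_lt_of_le one_pos hp
  have hpne : p ≠ 0 := ne_of_gt hp0
  have hip0 : (0:ℝ) ≤ 1/p := by positivity
  have habs : ∀ x : ℝ, 0 ≤ |x| ^ p := fun x => Real.rpow_nonneg (abs_nonneg x) p
  have hwpos := hw.pos
  by_cases hcase : ∃ δ : ℝ, 0 < δ ∧
      {n : ℕ | ∃ i, (P n ≤ i ∧ i < P (n+1)) ∧ δ ≤ |a i| ^ p}.Infinite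
  · -- Case 1: infinitely many blocks contain a coordinate with |a i|^p ≥ δ.
    obtain ⟨δ, hδ, hinf⟩ := hcase
    set Apred : ℕ → Prop := fun n => ∃ i, (P n ≤ i ∧ i < P (n+1)) ∧ δ ≤ |a i| ^ p with hApred
    have hinf' : (setOf Apred).Infinite := hinf
    set k : ℕ → ℕ := Nat.nth Apred with hkdef
    have hk : StrictMono k := Nat.nth_strictMono hinf'
    have hkmem : ∀ j, Apred (k j) := fun j => Nat.nth_mem_of_infinite hinf' j
    choose ι hι hιδ using hkmem
    have hιmono : StrictMono ι := by
      intro j j' hjj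
      have h1 : ι j < P (k j + 1) := (hι j).2
      have h2 : P (k j + 1) ≤ P (k j') := hP.monotone (Nat.succ_le_of_lt (hk hjj))
      have h3 : P (k j') ≤ ι j' := (hι j').1
      omega
    refine ⟨k, hk, δ⁻¹ ^ (1/p), Real.rpow_pos_of_pos (inv_pos.2 hδ) _, ?_⟩
    intro b hb
    set F := hb.toFinset with hFdef
    have hFs : ∀ j, j ∉ F → b j = 0 := by
      intro j hj
      by_contra hbj
      exact hj (hb.mem_toFinset.mpr hbj)
    set Z : ℕ → ℝ := fun i => ∑ j ∈ F, b j * y (k j) i with hZdef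
    simp only [garNorm]
    refine iSup_le ?_
    rintro ⟨φ, hφ⟩
    set ψ : ℕ → ℕ := fun n => ι (φ n) with hψdef
    have hψ : StrictMono ψ := hιmono.comp hφ
    have hterm : ∀ n, ENNReal.ofReal (|b (φ n)| ^ p * w n)
        ≤ ENNReal.ofReal δ⁻¹ * ENNReal.ofReal (|Z (ψ n)| ^ p * w n) := by
      intro n
      rw [← ENNReal.ofReal_mul (by positivity)]
      apply ENNReal.ofReal_le_ofReal
      have hzv : Z (ψ n) = b (φ n) * a (ι (φ n)) :=
        blocks_eval hP hy hk b F hFs (φ n) _ (hι (φ n)).1 (hι (φ n)).2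
      rw [hzv, abs_mul, Real.mul_rpow (abs_nonneg _) (abs_nonneg _)]
      have h1 : (1:ℝ) ≤ δ⁻¹ * |a (ι (φ n))| ^ p := by
        have := mul_le_mul_of_nonneg_left (hιδ (φ n)) (inv_nonneg.2 hδ.le)
        rwa [inv_mul_cancel₀ (ne_of_gt hδ)] at this
      calc |b (φ n)| ^ p * w n = 1 * (|b (φ n)| ^ p * w n) := (one_mul _).symm
        _ ≤ (δ⁻¹ * |a (ι (φ n))| ^ p) * (|b (φ n)| ^ p * w n) := by
            apply mul_le_mul_of_nonneg_right h1 (mul_nonneg (habs _) (hwpos n).le)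
        _ = δ⁻¹ * (|b (φ n)| ^ p * |a (ι (φ n))| ^ p * w n) := by ring
    refine le_trans (ENNReal.rpow_le_rpow (ENNReal.tsum_le_tsum hterm) hip0) ?_
    rw [ENNReal.tsum_mul_left, ENNReal.mul_rpow_of_nonneg _ _ hip0]
    apply mul_le_mul'
    · rw [ENNReal.ofReal_rpow_of_pos (inv_pos.2 hδ)]
    · exact le_iSup (fun φ' : {φ : ℕ → ℕ // StrictMono φ} =>
        (∑' n, ENNReal.ofReal (|Z (φ'.1 n)| ^ p * w n)) ^ (1/p)) ⟨ψ, hψ⟩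
  · -- Case 2: coordinates tend to zero.
    push_neg at hcase
    have hev : ∀ ε : ℝ, 0 < ε →
        ∀ᶠ n in atTop, ∀ i, P n ≤ i → i < P (n+1) → |a i| ^ p < ε := by
      intro ε hε
      have hfin : {n : ℕ | ∃ i, (P n ≤ i ∧ i < P (n+1)) ∧ ε ≤ |a i| ^ p}.Finite :=
        hcase ε hε
      have hmem : {n : ℕ | ∃ i, (P n ≤ i ∧ i < P (n+1)) ∧ ε ≤ |a i| ^ p}ᶜ ∈ Filter.cofinite :=
        hfin.compl_mem_cofinite
      rw [Nat.cofinite_eq_atTop] at hmem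
      filter_upwards [hmem] with n hn i h1 h2
      by_contra hge
      exact hn ⟨i, ⟨h1, h2⟩, le_of_not_gt hge⟩
    have hstep : ∀ K M : ℕ, ∃ (n : ℕ) (σ : ℕ → ℕ) (L : ℕ),
        K < n ∧ StrictMono σ ∧ (∀ s, s < L → P n ≤ σ s ∧ σ s < P (n + 1)) ∧
        (1/2 : ℝ) ≤ ∑ s ∈ Finset.range L, |a (σ s)| ^ p * w (M + s) := by
      intro K M
      have hε : (0:ℝ) < 1 / (4 * ((M:ℝ) + 1)) := by positivity
      obtain ⟨n, hn⟩ := ((hev _ hε).and (eventually_gt_atTop K)).exists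
      obtain ⟨σ, hσ, L, h3, h4⟩ :=
        good_sel hp hw hy n (hnorm n) M (fun i hi1 hi2 => (hn.1 i hi1 hi2).le)
      exact ⟨n, σ, L, hn.2, hσ, h3, h4⟩
    choose fn fσ fl hf1 hf2 hf3 hf4 using hstep
    obtain ⟨IN, hIN0, hINs⟩ : ∃ IN : ℕ → ℕ × ℕ, IN 0 = (0, 0) ∧
        ∀ t, IN (t+1) = (fn (IN t).1 (IN t).2, (IN t).2 + fl (IN t).1 (IN t).2) :=
      ⟨fun t => Nat.rec (0,0) (fun _ q => (fn q.1 q.2, q.2 + fl q.1 q.2)) t, rfl, fun t => rfl⟩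
    set k : ℕ → ℕ := fun t => fn (IN t).1 (IN t).2 with hkdef
    set Ms : ℕ → ℕ := fun t => (IN t).2 with hMsdef
    set σ : ℕ → ℕ → ℕ := fun t => fσ (IN t).1 (IN t).2 with hσdef
    set l : ℕ → ℕ := fun t => fl (IN t).1 (IN t).2 with hldef
    have hMs0 : Ms 0 = 0 := by rw [hMsdef]; simp [hIN0]
    have hMssucc : ∀ t, Ms (t+1) = Ms t + l t := by
      intro t
      simp only [hMsdef, hldef, hINs t]
    have hkmono : StrictMono k := by
      apply strictMono_nat_of_lt_succ
      intro t
      have hke : k (t+1) = fn (k t) (Ms (t+1)) := by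
        simp only [hkdef, hMsdef, hINs t]
      rw [hke]
      exact hf1 (k t) (Ms (t+1))
    have hσmono : ∀ t, StrictMono (σ t) := fun t => hf2 _ _
    have hblock : ∀ t s, s < l t → P (k t) ≤ σ t s ∧ σ t s < P (k t + 1) :=
      fun t => hf3 (IN t).1 (IN t).2
    have hsum : ∀ t, (1/2:ℝ) ≤ ∑ s ∈ Finset.range (l t), |a (σ t s)| ^ p * w (Ms t + s) :=
      fun t => hf4 (IN t).1 (IN t).2
    have hMsum : ∀ t, Ms t = ∑ u ∈ Finset.range t, l u := by
      intro t
      induction t with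
      | zero => simp [hMs0]
      | succ t ih => rw [hMssucc, Finset.sum_range_succ, ih]
    refine ⟨k, hkmono, 2, two_pos, ?_⟩
    intro b hb
    set F := hb.toFinset with hFdef
    have hFs : ∀ j, j ∉ F → b j = 0 := by
      intro j hj
      by_contra hbj
      exact hj (hb.mem_toFinset.mpr hbj)
    set Z : ℕ → ℝ := fun i => ∑ j ∈ F, b j * y (k j) i with hZdef
    have hZ : ∀ (j i : ℕ), P (k j) ≤ i → i < P (k j + 1) → Z i = b j * a i :=
      fun j i h1 h2 => blocks_eval hP hy hkmono b F hFs j i h1 h2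
    have claim : ∀ (F' : Finset ℕ), ∀ M lo : ℕ,
        (∀ j ∈ F', M + ∑ u ∈ F'.filter (· < j), l u ≤ Ms j) →
        (∀ j ∈ F', lo ≤ P (k j)) →
        ∃ ψ : ℕ → ℕ, StrictMono ψ ∧ (∀ m, lo ≤ ψ m) ∧
          ENNReal.ofReal (∑ j ∈ F', 1/2 * |b j| ^ p) ≤
            ∑' m, ENNReal.ofReal (|Z (ψ m)| ^ p * w (M + m)) := by
      intro F'
      induction F' using Finset.induction_on_min with
      | empty =>
          intro M lo _ _
          exact ⟨fun m => lo + m, fun m m' h => by simpa using h, fun m => Nat.le_add_right _ _, by simp⟩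
      | insert j₀ F'' hmin ih =>
          intro M lo hM hlo
          set L := l j₀ with hLdef
          have hj₀F : j₀ ∈ insert j₀ F'' := Finset.mem_insert_self _ _
          have hj₀notin : j₀ ∉ F'' := fun h => lt_irrefl j₀ (hmin j₀ h)
          have hMj₀ : M ≤ Ms j₀ := by
            have h := hM j₀ hj₀F
            have hempty : (insert j₀ F'').filter (· < j₀) = ∅ := by
              apply Finset.filter_false_of_mem
              intro x hx
              rcases Finset.mem_insert.1 hx with rfl | hx'
              · omega
              · have := hmin x hx'; omega
            rw [hempty] at h
            simpa using h
          have hM' : ∀ u ∈ F'', (M + L) + ∑ v ∈ F''.filter (· < u), l v ≤ Ms u := by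
            intro u hu
            have h := hM u (Finset.mem_insert_of_mem hu)
            have hfu : (insert j₀ F'').filter (· < u) = insert j₀ (F''.filter (· < u)) := by
              rw [Finset.filter_insert, if_pos (hmin u hu)]
            rw [hfu, Finset.sum_insert
              (fun hc => hj₀notin (Finset.mem_of_mem_filter _ hc))] at h
            omega
          have hlo' : ∀ u ∈ F'', P (k j₀ + 1) ≤ P (k u) :=
            fun u hu => hP.monotone (Nat.succ_le_of_lt (hkmono (hmin u hu)))
          obtain ⟨ψ', hψ'1, hψ'2, hψ'3⟩ := ih (M + L) (P (k j₀ + 1)) hM' hlo'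
          set ψ : ℕ → ℕ := fun m => if m < L then σ j₀ m else ψ' (m - L) with hψdef
          have hψblock : ∀ m, m < L → P (k j₀) ≤ ψ m ∧ ψ m < P (k j₀ + 1) := by
            intro m hm
            rw [hψdef]
            simp only [if_pos hm]
            exact hblock j₀ m hm
          have hψtail : ∀ m, ψ (m + L) = ψ' m := by
            intro m
            rw [hψdef]
            simp only
            rw [if_neg (by omega)]
            congr 1
            omega
          have hψmono : StrictMono ψ := by
            intro m m' hmm
            rcases lt_or_ge m' L with h' | h'
            · have h : m < L := lt_trans hmm h'
              rw [hψdef]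
              simp only [if_pos h, if_pos h']
              exact hσmono j₀ hmm
            · rcases lt_or_ge m L with h | h
              · have h1 : ψ m < P (k j₀ + 1) := (hψblock m h).2
                have h2 : P (k j₀ + 1) ≤ ψ' (m' - L) := hψ'2 _
                rw [hψdef] at h1 ⊢
                simp only [if_pos h] at h1
                simp only [if_pos h, if_neg (not_lt.2 h')]
                omega
              · rw [hψdef]
                simp only [if_neg (not_lt.2 h), if_neg (not_lt.2 h')]
                exact hψ'1 (by omega)
          have hψlo : ∀ m, lo ≤ ψ m := by
            intro m
            rcases lt_or_ge m L with h | h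
            · exact le_trans (hlo j₀ hj₀F) (hψblock m h).1
            · rw [hψdef]
              simp only [if_neg (not_lt.2 h)]
              exact le_trans (le_trans (hlo j₀ hj₀F) (hP.monotone (Nat.le_succ _))) (hψ'2 _)
          refine ⟨ψ, hψmono, hψlo, ?_⟩
          have harith : ∀ m : ℕ, M + (m + L) = M + L + m := fun m => by omega
          have hhead : ENNReal.ofReal (1/2 * |b j₀| ^ p)
              ≤ ∑ m ∈ Finset.range L, ENNReal.ofReal (|Z (ψ m)| ^ p * w (M + m)) := by
            rw [← ENNReal.ofReal_sum_of_nonneg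
              (fun m _ => mul_nonneg (habs _) (hwpos _).le)]
            apply ENNReal.ofReal_le_ofReal
            have hzv : ∀ m ∈ Finset.range L,
                |Z (ψ m)| ^ p * w (M + m) = |b j₀| ^ p * (|a (σ j₀ m)| ^ p * w (M + m)) := by
              intro m hm
              have hm' := Finset.mem_range.1 hm
              have hψm : ψ m = σ j₀ m := by rw [hψdef]; simp only [if_pos hm']
              have hb1 := hψblock m hm'
              rw [hψm] at hb1
              rw [hψm, hZ j₀ _ hb1.1 hb1.2, abs_mul,
                Real.mul_rpow (abs_nonneg _) (abs_nonneg _)]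
              ring
            rw [Finset.sum_congr rfl hzv, ← Finset.mul_sum]
            have h1 : (1/2:ℝ) ≤ ∑ m ∈ Finset.range L, |a (σ j₀ m)| ^ p * w (M + m) := by
              refine le_trans (hsum j₀) (Finset.sum_le_sum ?_)
              intro s _
              exact mul_le_mul_of_nonneg_left (hw.anti (by omega)) (habs _)
            calc 1/2 * |b j₀| ^ p = |b j₀| ^ p * (1/2) := by ring
              _ ≤ |b j₀| ^ p * ∑ m ∈ Finset.range L, |a (σ j₀ m)| ^ p * w (M + m) :=
                  mul_le_mul_of_nonneg_left h1 (habs _)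
          have htail : ENNReal.ofReal (∑ j ∈ F'', 1/2 * |b j| ^ p)
              ≤ ∑' m, ENNReal.ofReal (|Z (ψ (m + L))| ^ p * w (M + (m + L))) := by
            have heq : (∑' m, ENNReal.ofReal (|Z (ψ (m + L))| ^ p * w (M + (m + L))))
                = ∑' m, ENNReal.ofReal (|Z (ψ' m)| ^ p * w (M + L + m)) :=
              tsum_congr (fun m => by rw [hψtail m, harith m])
            rw [heq]
            exact hψ'3
          rw [Finset.sum_insert hj₀notin,
            ENNReal.ofReal_add (by positivity) (Finset.sum_nonneg fun j _ => by positivity)]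
          exact le_trans (add_le_add hhead htail)
            (le_of_eq (Summable.sum_add_tsum_nat_add' (f := fun m =>
              ENNReal.ofReal (|Z (ψ m)| ^ p * w (M + m))) (k := L) ENNReal.summable))
    obtain ⟨ψ, hψmono, _, hψle⟩ := claim F 0 0
      (fun j _ => by
        rw [zero_add, hMsum j]
        exact Finset.sum_le_sum_of_subset
          (fun u hu => Finset.mem_range.2 (Finset.mem_filter.1 hu).2))
      (fun j _ => Nat.zero_le _)
    simp only [zero_add] at hψle
    simp only [garNorm]
    refine iSup_le ?_
    rintro ⟨φ, hφ⟩
    have hb1 : (∑' n, ENNReal.ofReal (|b (φ n)| ^ p * w n))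
        ≤ ENNReal.ofReal (∑ j ∈ F, |b j| ^ p) := by
      calc ∑' n, ENNReal.ofReal (|b (φ n)| ^ p * w n)
          ≤ ∑' n, ENNReal.ofReal (|b (φ n)| ^ p) :=
            ENNReal.tsum_le_tsum fun n => ENNReal.ofReal_le_ofReal
              (mul_le_of_le_one_right (habs _) (hw.le_one n))
        _ ≤ ∑' j, ENNReal.ofReal (|b j| ^ p) :=
            ENNReal.tsum_comp_le_tsum_of_injective hφ.injective _
        _ = ∑ j ∈ F, ENNReal.ofReal (|b j| ^ p) := by
            apply tsum_eq_sum
            intro j hj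
            rw [hFs j hj, abs_zero, Real.zero_rpow hpne, ENNReal.ofReal_zero]
        _ = ENNReal.ofReal (∑ j ∈ F, |b j| ^ p) :=
            (ENNReal.ofReal_sum_of_nonneg fun j _ => habs _).symm
    have hS : (∑ j ∈ F, |b j| ^ p) = 2 * ∑ j ∈ F, 1/2 * |b j| ^ p := by
      rw [Finset.mul_sum]
      exact Finset.sum_congr rfl fun j _ => by ring
    calc (∑' n, ENNReal.ofReal (|b (φ n)| ^ p * w n)) ^ (1/p)
        ≤ (ENNReal.ofReal (∑ j ∈ F, |b j| ^ p)) ^ (1/p) := ENNReal.rpow_le_rpow hb1 hip0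
      _ = (ENNReal.ofReal 2 * ENNReal.ofReal (∑ j ∈ F, 1/2 * |b j| ^ p)) ^ (1/p) := by
          rw [hS, ENNReal.ofReal_mul (by norm_num)]
      _ = (ENNReal.ofReal 2) ^ (1/p) * (ENNReal.ofReal (∑ j ∈ F, 1/2 * |b j| ^ p)) ^ (1/p) :=
          ENNReal.mul_rpow_of_nonneg _ _ hip0
      _ ≤ ENNReal.ofReal 2 * garNorm w p Z := by
          apply mul_le_mul'
          · calc (ENNReal.ofReal 2) ^ (1/p) ≤ (ENNReal.ofReal 2) ^ (1:ℝ) := by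
                  apply ENNReal.rpow_le_rpow_of_exponent_le
                  · exact ENNReal.one_le_ofReal.2 one_le_two
                  · rw [div_le_one hp0]; exact hp
              _ = ENNReal.ofReal 2 := ENNReal.rpow_one _
          · calc (ENNReal.ofReal (∑ j ∈ F, 1/2 * |b j| ^ p)) ^ (1/p)
                ≤ (∑' m, ENNReal.ofReal (|Z (ψ m)| ^ p * w m)) ^ (1/p) :=
                  ENNReal.rpow_le_rpow hψle hip0
              _ ≤ garNorm w p Z := by
                  rw [garNorm]
                  exact le_iSup (fun φ' : {φ : ℕ → ℕ // StrictMono φ} =>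
                    (∑' n, ENNReal.ofReal (|Z (φ'.1 n)| ^ p * w n)) ^ (1/p)) ⟨ψ, hψmono⟩
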